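/- Let p(·) be a measurable exponent with 0 < p₋ ≤ p₊ < ∞ on a probability space, let 0 < q₁ ≤ q₂ ≤ ∞, and let b₁, b₂ be slowly varying functions with sup_{t≥1} b₂(t)/b₁(t) < ∞. Then L_{p(·),q₁,b₁} ⊆ L_{p(·),q₂,b₂}, and ‖f‖_{p(·),q₂,b₂} ≲ ‖f‖_{p(·),q₁,b₁}. -/

import Mathlib

open MeasureTheory Set ENNReal Filter Topology

noncomputable section

/-- A measurable function `b : [1,∞) → (0,∞)` is slowly varying if for every `ε > 0`,
`t ^ ε * b t` is equivalent (up to multiplicative constants) to a nondecreasing function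
and `t ^ (-ε) * b t` is equivalent to a nonincreasing function on `[1,∞)`. -/
def SlowlyVarying (b : ℝ → ℝ) : Prop :=
  (∀ t : ℝ, 1 ≤ t → 0 < b t) ∧
  ∀ ε : ℝ, 0 < ε →
    ((∃ g : ℝ → ℝ, MonotoneOn g (Set.Ici 1) ∧ ∃ c > (0:ℝ), ∃ C > (0:ℝ),
        ∀ t : ℝ, 1 ≤ t → c * g t ≤ t ^ ε * b t ∧ t ^ ε * b t ≤ C * g t) ∧
     (∃ g : ℝ → ℝ, AntitoneOn g (Set.Ici 1) ∧ ∃ c > (0:ℝ), ∃ C > (0:ℝ),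
        ∀ t : ℝ, 1 ≤ t → c * g t ≤ t ^ (-ε) * b t ∧ t ^ (-ε) * b t ≤ C * g t))

/-- `γ_b(t) = b (max {t, t⁻¹})` for `t > 0`. -/
def gammaB (b : ℝ → ℝ) (t : ℝ) : ℝ := b (max t t⁻¹)

variable {Ω : Type*} [MeasurableSpace Ω]

/-- The variable Lebesgue quasi-norm
`‖f‖_{p(·)} = inf {λ > 0 : ∫ (|f|/λ)^{p(·)} dμ ≤ 1}`. -/
def vLpNorm (μ : Measure Ω) (p : Ω → ℝ) (f : Ω → ℝ) : ℝ :=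
  sInf {lam : ℝ | 0 < lam ∧ ∫⁻ ω, ENNReal.ofReal ((|f ω| / lam) ^ p ω) ∂μ ≤ 1}

/-- `f ∈ L_{p(·)}` : the modular is finite for some `λ > 0`. -/
def MemVLp (μ : Measure Ω) (p : Ω → ℝ) (f : Ω → ℝ) : Prop :=
  ∃ lam > (0:ℝ), ∫⁻ ω, ENNReal.ofReal ((|f ω| / lam) ^ p ω) ∂μ ≤ 1

/-- `‖χ_A‖_{p(·)}`. -/
def chiNorm (μ : Measure Ω) (p : Ω → ℝ) (A : Set Ω) : ℝ :=
  vLpNorm μ p (A.indicator 1)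

/-- The variable Lorentz–Karamata quasi-norm `‖f‖_{p(·),q,b}` (with `q ∈ (0,∞]`). -/
def vLKNorm (μ : Measure Ω) (p : Ω → ℝ) (q : ℝ≥0∞) (b : ℝ → ℝ) (f : Ω → ℝ) : ℝ≥0∞ :=
  if q = ∞ then
    ⨆ t ∈ Set.Ioi (0:ℝ), ENNReal.ofReal
      (t * chiNorm μ p {ω | t < |f ω|} * gammaB b (chiNorm μ p {ω | t < |f ω|}))
  else
    (∫⁻ t in Set.Ioi (0:ℝ), ENNReal.ofReal
      ((t * chiNorm μ p {ω | t < |f ω|} * gammaB b (chiNorm μ p {ω | t < |f ω|})) ^ q.toReal / t))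
      ^ (1 / q.toReal)

section Aux
variable {Ω : Type*} [MeasurableSpace Ω]

lemma one_mem_chiSet (μ : Measure Ω) [IsProbabilityMeasure μ] (p : Ω → ℝ)
    (hp : ∀ᵐ ω ∂μ, 0 < p ω) (A : Set Ω) :
    (0:ℝ) < 1 ∧ ∫⁻ ω, ENNReal.ofReal ((|A.indicator (1 : Ω → ℝ) ω| / 1) ^ p ω) ∂μ ≤ 1 := by
  refine ⟨one_pos, ?_⟩
  have h : ∀ᵐ ω ∂μ, ENNReal.ofReal ((|A.indicator (1 : Ω → ℝ) ω| / 1) ^ p ω) ≤ 1 := by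
    filter_upwards [hp] with ω hω
    by_cases h : ω ∈ A
    · simp [Set.indicator_of_mem h]
    · simp [Set.indicator_of_notMem h, Real.zero_rpow hω.ne']
  calc ∫⁻ ω, ENNReal.ofReal ((|A.indicator (1 : Ω → ℝ) ω| / 1) ^ p ω) ∂μ
      ≤ ∫⁻ _ω, 1 ∂μ := lintegral_mono_ae h
    _ = 1 := by simp

lemma chiNorm_nonneg (μ : Measure Ω) (p : Ω → ℝ) (A : Set Ω) : 0 ≤ chiNorm μ p A :=
  Real.sInf_nonneg fun x hx => hx.1.le

lemma chiNorm_le_one (μ : Measure Ω) [IsProbabilityMeasure μ] (p : Ω → ℝ)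
    (hp : ∀ᵐ ω ∂μ, 0 < p ω) (A : Set Ω) : chiNorm μ p A ≤ 1 :=
  csInf_le ⟨0, fun x hx => hx.1.le⟩ (one_mem_chiSet μ p hp A)

lemma chiNorm_mono (μ : Measure Ω) [IsProbabilityMeasure μ] (p : Ω → ℝ)
    (hp : ∀ᵐ ω ∂μ, 0 < p ω) {A B : Set Ω} (hAB : A ⊆ B) :
    chiNorm μ p A ≤ chiNorm μ p B := by
  simp only [chiNorm, vLpNorm]
  refine csInf_le_csInf ⟨0, fun x hx => hx.1.le⟩ ⟨1, one_mem_chiSet μ p hp B⟩ ?_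
  rintro lam ⟨hlam, hint⟩
  refine ⟨hlam, le_trans (lintegral_mono_ae ?_) hint⟩
  filter_upwards [hp] with ω hω
  apply ENNReal.ofReal_le_ofReal
  apply Real.rpow_le_rpow (by positivity) ?_ hω.le
  have hind : |A.indicator (1 : Ω → ℝ) ω| ≤ |B.indicator (1 : Ω → ℝ) ω| :=
    calc |A.indicator (1 : Ω → ℝ) ω| = A.indicator (1:Ω→ℝ) ω :=
          abs_of_nonneg (Set.indicator_nonneg (fun a _ => zero_le_one) ω)
      _ ≤ B.indicator (1:Ω→ℝ) ω := Set.indicator_le_indicator_of_subset hAB (fun a => zero_le_one) ω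
      _ ≤ |B.indicator (1:Ω→ℝ) ω| := le_abs_self _
  gcongr

end Aux
lemma sup_le_lint (D : ℝ → ℝ) (Kc q : ℝ) (hK1 : 1 ≤ Kc) (hq : 0 < q)
    (hD0 : ∀ t : ℝ, 0 < t → 0 ≤ D t)
    (hdec : ∀ s t : ℝ, 0 < s → s ≤ t → D t ≤ Kc * D s) (t : ℝ) (ht : 0 < t) :
    ENNReal.ofReal (t * D t) ≤ ENNReal.ofReal (2 * Kc * 2 ^ (1/q)) *
      (∫⁻ s in Set.Ioi (0:ℝ), ENNReal.ofReal ((s * D s) ^ q / s)) ^ (1/q) := by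
  set J := ∫⁻ s in Set.Ioi (0:ℝ), ENNReal.ofReal ((s * D s) ^ q / s) with hJ
  have hKc0 : (0:ℝ) < Kc := lt_of_lt_of_le one_pos hK1
  have hDt := hD0 t ht
  have h2q : (0:ℝ) < (2:ℝ) ^ (1/q) := Real.rpow_pos_of_pos two_pos _
  have ha0 : 0 ≤ t * D t / (2 * Kc) := by positivity
  have hlow : ENNReal.ofReal ((t * D t / (2 * Kc)) ^ q / t) * ENNReal.ofReal (t / 2) ≤ J := by
    have hsub : Set.Ioo (t/2) t ⊆ Set.Ioi (0:ℝ) := fun s hs => lt_trans (by linarith) hs.1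
    calc ENNReal.ofReal ((t * D t / (2*Kc)) ^ q / t) * ENNReal.ofReal (t/2)
        = ∫⁻ _s in Set.Ioo (t/2) t, ENNReal.ofReal ((t * D t / (2*Kc)) ^ q / t) := by
          rw [setLIntegral_const, Real.volume_Ioo]
          congr 2
          ring
      _ ≤ ∫⁻ s in Set.Ioo (t/2) t, ENNReal.ofReal ((s * D s) ^ q / s) := by
          refine lintegral_mono_ae ((ae_restrict_iff' measurableSet_Ioo).2 (ae_of_all _ ?_))
          intro s hs
          have hs0 : 0 < s := lt_trans (by linarith) hs.1
          have hDs := hD0 s hs0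
          apply ENNReal.ofReal_le_ofReal
          have h1 : t * D t / (2*Kc) ≤ s * D s := by
            rw [div_le_iff₀ (by positivity)]
            have h2 : D t ≤ Kc * D s := hdec s t hs0 hs.2.le
            nlinarith [mul_le_mul_of_nonneg_left h2 ht.le,
              mul_le_mul_of_nonneg_right (show t ≤ 2*s by linarith [hs.1]) (mul_nonneg hKc0.le hDs)]
          have hrp : (t * D t / (2*Kc)) ^ q ≤ (s * D s) ^ q := Real.rpow_le_rpow ha0 h1 hq.le
          calc (t * D t / (2*Kc)) ^ q / t ≤ (s * D s) ^ q / t := by gcongr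
            _ ≤ (s * D s) ^ q / s := by
                have hx : (0:ℝ) ≤ (s * D s) ^ q := Real.rpow_nonneg (by positivity) _
                gcongr
                exact hs.2.le
      _ ≤ J := lintegral_mono' (Measure.restrict_mono hsub le_rfl) le_rfl
  have hmid : ENNReal.ofReal ((t * D t / (2*Kc)) ^ q / 2) ≤ J := by
    have he : ENNReal.ofReal ((t*D t/(2*Kc))^q / t) * ENNReal.ofReal (t/2)
        = ENNReal.ofReal ((t*D t/(2*Kc))^q / 2) := by
      rw [← ENNReal.ofReal_mul (by positivity)]
      congr 1
      field_simp
    rw [← he]; exact hlow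
  have h3 : ENNReal.ofReal ((t*D t/(2*Kc))^q/2) ^ (1/q) ≤ J ^ (1/q) :=
    ENNReal.rpow_le_rpow hmid (by positivity)
  have h4 : ENNReal.ofReal ((t*D t/(2*Kc))^q/2) ^ (1/q)
      = ENNReal.ofReal (t*D t/(2*Kc) / 2^(1/q)) := by
    rw [ENNReal.ofReal_rpow_of_nonneg (by positivity) (by positivity)]
    congr 1
    rw [Real.div_rpow (by positivity) (by norm_num)]
    congr 1
    rw [← Real.rpow_mul ha0, mul_one_div_cancel hq.ne', Real.rpow_one]
  rw [h4] at h3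
  calc ENNReal.ofReal (t * D t)
      = ENNReal.ofReal (2*Kc*2^(1/q)) * ENNReal.ofReal (t*D t/(2*Kc)/2^(1/q)) := by
        rw [← ENNReal.ofReal_mul (by positivity)]
        congr 1
        field_simp
    _ ≤ ENNReal.ofReal (2*Kc*2^(1/q)) * J ^ (1/q) := mul_le_mul_right h3 _
/-- Embedding of variable Lorentz–Karamata spaces: if `0 < q₁ ≤ q₂ ≤ ∞` and
`sup_{t≥1} b₂(t)/b₁(t) < ∞`, then `L_{p(·),q₁,b₁} ⊆ L_{p(·),q₂,b₂}` with
`‖f‖_{p(·),q₂,b₂} ≲ ‖f‖_{p(·),q₁,b₁}`. -/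
theorem vLKNorm_embedding (μ : Measure Ω) [IsProbabilityMeasure μ]
    (p : Ω → ℝ) (pl pu : ℝ) (hpl : 0 < pl) (hple : pl ≤ pu)
    (hp : ∀ᵐ ω ∂μ, pl ≤ p ω ∧ p ω ≤ pu)
    (q₁ q₂ : ℝ≥0∞) (hq₁ : 0 < q₁) (hq : q₁ ≤ q₂)
    (b₁ b₂ : ℝ → ℝ) (hb₁ : SlowlyVarying b₁) (hb₂ : SlowlyVarying b₂)
    (hbb : ∃ M : ℝ, ∀ t : ℝ, 1 ≤ t → b₂ t / b₁ t ≤ M) :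
    ∃ C > (0:ℝ), ∀ f : Ω → ℝ, Measurable f →
      vLKNorm μ p q₂ b₂ f ≤ ENNReal.ofReal C * vLKNorm μ p q₁ b₁ f := by
  classical
  have hp' : ∀ᵐ ω ∂μ, 0 < p ω := hp.mono fun ω h => lt_of_lt_of_le hpl h.1
  obtain ⟨hb₁pos, hb₁sv⟩ := hb₁
  have hb₂pos := hb₂.1
  obtain ⟨-, g, hg, c, hc, Cg, hCg, hgbd⟩ := hb₁sv 1 one_pos
  set K : ℝ := max (Cg / c) 1 with hKdef
  have hK1 : (1:ℝ) ≤ K := le_max_right _ _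
  have hK0 : (0:ℝ) < K := lt_of_lt_of_le one_pos hK1
  have hK : ∀ u v : ℝ, 1 ≤ u → u ≤ v → v⁻¹ * b₁ v ≤ K * (u⁻¹ * b₁ u) := by
    intro u v hu huv
    have hv : (1:ℝ) ≤ v := hu.trans huv
    have h1 := hgbd u hu
    have h2 := hgbd v hv
    rw [Real.rpow_neg_one] at h1 h2
    have hbu : 0 < u⁻¹ * b₁ u := by
      have := hb₁pos u hu
      have hu0 : (0:ℝ) < u := lt_of_lt_of_le one_pos hu
      positivity
    have hgv : g v ≤ g u := hg hu hv huv
    calc v⁻¹ * b₁ v ≤ Cg * g v := h2.2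
      _ ≤ Cg * g u := mul_le_mul_of_nonneg_left hgv hCg.le
      _ = (Cg / c) * (c * g u) := by field_simp
      _ ≤ (Cg / c) * (u⁻¹ * b₁ u) := mul_le_mul_of_nonneg_left h1.1 (by positivity)
      _ ≤ K * (u⁻¹ * b₁ u) := mul_le_mul_of_nonneg_right (le_max_left _ _) hbu.le
  obtain ⟨M₀, hM₀⟩ := hbb
  set M : ℝ := max M₀ 1 with hMdef
  have hM1 : (1:ℝ) ≤ M := le_max_right _ _
  have hM0 : (0:ℝ) < M := lt_of_lt_of_le one_pos hM1
  have hM : ∀ u : ℝ, 1 ≤ u → b₂ u ≤ M * b₁ u := fun u hu =>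
    (div_le_iff₀ (hb₁pos u hu)).mp ((hM₀ u hu).trans (le_max_left _ _))
  set q : ℝ := q₁.toReal with hqdef
  have hqnn : (0:ℝ) ≤ q := ENNReal.toReal_nonneg
  have h2q : (1:ℝ) ≤ (2:ℝ) ^ (1/q) := by
    have h : (0:ℝ) ≤ 1/q := by positivity
    calc (1:ℝ) = 2 ^ (0:ℝ) := by rw [Real.rpow_zero]
      _ ≤ 2 ^ (1/q) := Real.rpow_le_rpow_of_exponent_le one_le_two h
  set c₁ : ℝ := 2 * K * (2:ℝ) ^ (1/q) with hc₁def
  have hc₁1 : (1:ℝ) ≤ c₁ := by nlinarith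
  have hc₁0 : (0:ℝ) < c₁ := lt_of_lt_of_le one_pos hc₁1
  refine ⟨M * c₁, by positivity, fun f _hf => ?_⟩
  set I₁ : ℝ≥0∞ := vLKNorm μ p q₁ b₁ f with hI₁def
  -- basic facts about N t := chiNorm μ p {ω | t < |f ω|}
  have hN0 : ∀ t : ℝ, 0 ≤ chiNorm μ p {ω | t < |f ω|} := fun t => chiNorm_nonneg μ p _
  have hN1 : ∀ t : ℝ, chiNorm μ p {ω | t < |f ω|} ≤ 1 := fun t => chiNorm_le_one μ p hp' _
  have hNanti : ∀ s t : ℝ, s ≤ t →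
      chiNorm μ p {ω | t < |f ω|} ≤ chiNorm μ p {ω | s < |f ω|} := fun s t hst =>
    chiNorm_mono μ p hp' (fun ω hω => lt_of_le_of_lt hst hω)
  have hgam : ∀ (b : ℝ → ℝ) (x : ℝ), 0 < x → x ≤ 1 → gammaB b x = b x⁻¹ := by
    intro b x hx hx1
    have hxi : (1:ℝ) ≤ x⁻¹ := (one_le_inv₀ hx).mpr hx1
    rw [gammaB, max_eq_right (hx1.trans hxi)]
  -- nonnegativity of N t * γ_b(N t)
  have hD0 : ∀ (b : ℝ → ℝ), (∀ u : ℝ, 1 ≤ u → 0 < b u) → ∀ t : ℝ,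
      0 ≤ chiNorm μ p {ω | t < |f ω|} * gammaB b (chiNorm μ p {ω | t < |f ω|}) := by
    intro b hbpos t
    rcases eq_or_lt_of_le (hN0 t) with h | h
    · rw [← h, zero_mul]
    · have hxi : (1:ℝ) ≤ (chiNorm μ p {ω | t < |f ω|})⁻¹ := (one_le_inv₀ h).mpr (hN1 t)
      rw [hgam b _ h (hN1 t)]
      exact le_of_lt (mul_pos h (hbpos _ hxi))
  -- almost-decreasing property of N t * γ_{b₁}(N t)
  have hDdec : ∀ s t : ℝ, 0 < s → s ≤ t →
      chiNorm μ p {ω | t < |f ω|} * gammaB b₁ (chiNorm μ p {ω | t < |f ω|}) ≤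
      K * (chiNorm μ p {ω | s < |f ω|} * gammaB b₁ (chiNorm μ p {ω | s < |f ω|})) := by
    intro s t hs hst
    rcases eq_or_lt_of_le (hN0 t) with h | h
    · rw [← h, zero_mul]
      exact mul_nonneg hK0.le (hD0 b₁ hb₁pos s)
    · have hNs : 0 < chiNorm μ p {ω | s < |f ω|} := lt_of_lt_of_le h (hNanti s t hst)
      rw [hgam b₁ _ h (hN1 t), hgam b₁ _ hNs (hN1 s)]
      have hu : (1:ℝ) ≤ (chiNorm μ p {ω | s < |f ω|})⁻¹ := (one_le_inv₀ hNs).mpr (hN1 s)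
      have huv : (chiNorm μ p {ω | s < |f ω|})⁻¹ ≤ (chiNorm μ p {ω | t < |f ω|})⁻¹ :=
        inv_anti₀ h (hNanti s t hst)
      have hkk := hK _ _ hu huv
      rwa [inv_inv, inv_inv] at hkk
  -- comparison of b₂-expression with b₁-expression
  have hcomp : ∀ t : ℝ, 0 ≤ t →
      t * chiNorm μ p {ω | t < |f ω|} * gammaB b₂ (chiNorm μ p {ω | t < |f ω|}) ≤
      M * (t * chiNorm μ p {ω | t < |f ω|} * gammaB b₁ (chiNorm μ p {ω | t < |f ω|})) := by
    intro t ht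
    rcases eq_or_lt_of_le (hN0 t) with h | h
    · rw [← h]; simp
    · rw [hgam b₂ _ h (hN1 t), hgam b₁ _ h (hN1 t)]
      have hu : (1:ℝ) ≤ (chiNorm μ p {ω | t < |f ω|})⁻¹ := (one_le_inv₀ h).mpr (hN1 t)
      have h2 := hM _ hu
      have h3 : t * chiNorm μ p {ω | t < |f ω|} * b₂ (chiNorm μ p {ω | t < |f ω|})⁻¹ ≤
          t * chiNorm μ p {ω | t < |f ω|} * (M * b₁ (chiNorm μ p {ω | t < |f ω|})⁻¹) :=
        mul_le_mul_of_nonneg_left h2 (by positivity)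
      refine h3.trans (le_of_eq ?_)
      ring
  -- key estimate : each value is dominated by the q₁-norm
  have hkey : ∀ t : ℝ, 0 < t →
      ENNReal.ofReal (t * chiNorm μ p {ω | t < |f ω|} * gammaB b₁ (chiNorm μ p {ω | t < |f ω|}))
        ≤ ENNReal.ofReal c₁ * I₁ := by
    intro t ht
    by_cases hq₁top : q₁ = ∞
    · have hle : ENNReal.ofReal
          (t * chiNorm μ p {ω | t < |f ω|} * gammaB b₁ (chiNorm μ p {ω | t < |f ω|})) ≤ I₁ := by
        rw [hI₁def]
        simp only [vLKNorm, if_pos hq₁top]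
        exact le_iSup₂ (f := fun s (_ : s ∈ Set.Ioi (0:ℝ)) => ENNReal.ofReal
          (s * chiNorm μ p {ω | s < |f ω|} * gammaB b₁ (chiNorm μ p {ω | s < |f ω|}))) t ht
      exact hle.trans (le_mul_of_one_le_left' (ENNReal.one_le_ofReal.mpr hc₁1))
    · have hq0 : 0 < q := ENNReal.toReal_pos hq₁.ne' hq₁top
      have h := sup_le_lint
        (fun s => chiNorm μ p {ω | s < |f ω|} * gammaB b₁ (chiNorm μ p {ω | s < |f ω|}))
        K q hK1 hq0 (fun s _ => hD0 b₁ hb₁pos s) hDdec t ht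
      rw [hI₁def]
      simp only [vLKNorm, if_neg hq₁top]
      simp only [← mul_assoc] at h
      exact h
  -- now split on q₂
  by_cases hq₂top : q₂ = ∞
  · rw [hq₂top]
    simp only [vLKNorm, if_pos rfl]
    refine iSup₂_le fun t ht => ?_
    have ht0 : (0:ℝ) < t := ht
    refine le_trans (ENNReal.ofReal_le_ofReal (hcomp t ht0.le)) ?_
    rw [ENNReal.ofReal_mul hM0.le, ENNReal.ofReal_mul hM0.le]
    exact le_trans (mul_le_mul_right (hkey t ht0) _) (le_of_eq (mul_assoc _ _ _).symm)
  · -- q₂ < ∞, hence q₁ < ∞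
    have hq₁top : q₁ ≠ ∞ := fun h => hq₂top (top_le_iff.mp (h ▸ hq))
    have hq0 : 0 < q := ENNReal.toReal_pos hq₁.ne' hq₁top
    simp only [vLKNorm, if_neg hq₂top]
    set q2 : ℝ := q₂.toReal with hq2def
    have hq20 : 0 < q2 := ENNReal.toReal_pos (lt_of_lt_of_le hq₁ hq).ne' hq₂top
    have hqle : q ≤ q2 := ENNReal.toReal_mono hq₂top hq
    rcases eq_or_ne I₁ ∞ with hI | hI
    · have hCne : ENNReal.ofReal (M * c₁) ≠ 0 := by
        simp only [ne_eq, ENNReal.ofReal_eq_zero, not_le]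
        positivity
      rw [hI, ENNReal.mul_top hCne]
      exact le_top
    rcases eq_or_ne I₁ 0 with hI0 | hI0
    · -- everything is zero
      have hzero : ∀ t : ℝ, 0 < t → chiNorm μ p {ω | t < |f ω|} = 0 := by
        intro t ht
        by_contra hne
        have hNt : 0 < chiNorm μ p {ω | t < |f ω|} :=
          lt_of_le_of_ne (hN0 t) (Ne.symm hne)
        have h := hkey t ht
        rw [hI0, mul_zero, le_zero_iff, ENNReal.ofReal_eq_zero] at h
        have hxi : (1:ℝ) ≤ (chiNorm μ p {ω | t < |f ω|})⁻¹ := (one_le_inv₀ hNt).mpr (hN1 t)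
        rw [hgam b₁ _ hNt (hN1 t)] at h
        have hpos : 0 < t * chiNorm μ p {ω | t < |f ω|} * b₁ (chiNorm μ p {ω | t < |f ω|})⁻¹ :=
          mul_pos (mul_pos ht hNt) (hb₁pos _ hxi)
        linarith
      have hzint : (∫⁻ t in Set.Ioi (0:ℝ), ENNReal.ofReal
          ((t * chiNorm μ p {ω | t < |f ω|} * gammaB b₂ (chiNorm μ p {ω | t < |f ω|})) ^ q2 / t))
          = 0 := by
        rw [← le_zero_iff]
        have hb : (∫⁻ _t in Set.Ioi (0:ℝ), (0:ℝ≥0∞)) = 0 := lintegral_zero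
        rw [← hb]
        refine lintegral_mono_ae ((ae_restrict_iff' measurableSet_Ioi).2 (ae_of_all _ ?_))
        intro t ht
        rw [hzero t ht]
        simp [Real.zero_rpow hq20.ne']
      rw [hzint, ENNReal.zero_rpow_of_pos (by positivity)]
      exact zero_le
    · -- main case : 0 < I₁ < ∞
      have hI₁eq : I₁ = (∫⁻ t in Set.Ioi (0:ℝ), ENNReal.ofReal
          ((t * chiNorm μ p {ω | t < |f ω|} * gammaB b₁ (chiNorm μ p {ω | t < |f ω|})) ^ q / t))
          ^ (1/q) := by
        rw [hI₁def]
        simp only [vLKNorm, if_neg hq₁top]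
        rfl
      set B : ℝ≥0∞ := ENNReal.ofReal c₁ * I₁ with hBdef
      have hB0 : B ≠ 0 := mul_ne_zero (ENNReal.ofReal_pos.mpr hc₁0).ne' hI0
      have hBtop : B ≠ ∞ := ENNReal.mul_ne_top ENNReal.ofReal_ne_top hI
      have hIleB : I₁ ≤ B := le_mul_of_one_le_left' (ENNReal.one_le_ofReal.mpr hc₁1)
      have hfin : ENNReal.ofReal (M ^ q2) * B ^ (q2 - q) ≠ ∞ :=
        ENNReal.mul_ne_top ENNReal.ofReal_ne_top
          (ENNReal.rpow_ne_top_of_nonneg (by linarith) hBtop)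
      -- pointwise estimate
      have hpt : ∀ s : ℝ, s ∈ Set.Ioi (0:ℝ) → ENNReal.ofReal
          ((s * chiNorm μ p {ω | s < |f ω|} * gammaB b₂ (chiNorm μ p {ω | s < |f ω|})) ^ q2 / s)
          ≤ ENNReal.ofReal (M ^ q2) * B ^ (q2 - q) * ENNReal.ofReal
          ((s * chiNorm μ p {ω | s < |f ω|} * gammaB b₁ (chiNorm μ p {ω | s < |f ω|})) ^ q / s) := by
        intro s hs
        have hs0 : (0:ℝ) < s := hs
        have ha0 : 0 ≤ s * chiNorm μ p {ω | s < |f ω|} * gammaB b₂ (chiNorm μ p {ω | s < |f ω|}) := by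
          rw [mul_assoc]
          exact mul_nonneg hs0.le (hD0 b₂ hb₂pos s)
        have hd0 : 0 ≤ s * chiNorm μ p {ω | s < |f ω|} * gammaB b₁ (chiNorm μ p {ω | s < |f ω|}) := by
          rw [mul_assoc]
          exact mul_nonneg hs0.le (hD0 b₁ hb₁pos s)
        have had := hcomp s hs0.le
        have hkd := hkey s hs0
        set a : ℝ := s * chiNorm μ p {ω | s < |f ω|} * gammaB b₂ (chiNorm μ p {ω | s < |f ω|}) with hadef
        set d : ℝ := s * chiNorm μ p {ω | s < |f ω|} * gammaB b₁ (chiNorm μ p {ω | s < |f ω|}) with hddef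
        have h1 : a ^ q2 ≤ M ^ q2 * (d ^ (q2 - q) * d ^ q) := by
          have e1 : a ^ q2 ≤ (M * d) ^ q2 := Real.rpow_le_rpow ha0 had hq20.le
          have e2 : (M * d) ^ q2 = M ^ q2 * d ^ q2 := Real.mul_rpow hM0.le hd0
          have e3 : d ^ q2 = d ^ (q2 - q) * d ^ q := by
            rw [← Real.rpow_add' hd0 (by linarith : q2 - q + q ≠ 0)]
            norm_num
          rw [e2, e3] at e1
          exact e1
        have h2 : a ^ q2 / s ≤ M ^ q2 * d ^ (q2 - q) * (d ^ q / s) := by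
          have e4 : a ^ q2 / s ≤ (M ^ q2 * (d ^ (q2 - q) * d ^ q)) / s := by gcongr
          refine e4.trans (le_of_eq ?_)
          ring
        have h5 : ENNReal.ofReal (M ^ q2 * d ^ (q2-q) * (d ^ q / s)) =
            ENNReal.ofReal (M ^ q2) * ENNReal.ofReal (d ^ (q2-q)) * ENNReal.ofReal (d ^ q / s) := by
          rw [ENNReal.ofReal_mul (by positivity), ENNReal.ofReal_mul (by positivity)]
        have h6 : ENNReal.ofReal (d ^ (q2-q)) ≤ B ^ (q2-q) := by
          rw [← ENNReal.ofReal_rpow_of_nonneg hd0 (by linarith : (0:ℝ) ≤ q2 - q)]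
          exact ENNReal.rpow_le_rpow hkd (by linarith)
        refine le_trans (ENNReal.ofReal_le_ofReal h2) ?_
        rw [h5]
        exact mul_le_mul_left (mul_le_mul_right h6 _) _
      -- integrate the pointwise estimate
      have hJeq : I₁ ^ q = ∫⁻ s in Set.Ioi (0:ℝ), ENNReal.ofReal
          ((s * chiNorm μ p {ω | s < |f ω|} * gammaB b₁ (chiNorm μ p {ω | s < |f ω|})) ^ q / s) := by
        rw [hI₁eq, one_div, ENNReal.rpow_inv_rpow hq0.ne']
      have hint : (∫⁻ s in Set.Ioi (0:ℝ), ENNReal.ofReal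
          ((s * chiNorm μ p {ω | s < |f ω|} * gammaB b₂ (chiNorm μ p {ω | s < |f ω|})) ^ q2 / s))
          ≤ ENNReal.ofReal (M ^ q2) * B ^ (q2 - q) * I₁ ^ q := by
        rw [hJeq, ← lintegral_const_mul' _ _ hfin]
        exact lintegral_mono_ae ((ae_restrict_iff' measurableSet_Ioi).2 (ae_of_all _ hpt))
      refine le_trans (ENNReal.rpow_le_rpow hint (by positivity : (0:ℝ) ≤ 1/q2)) ?_
      have hstep : ENNReal.ofReal (M ^ q2) * B ^ (q2 - q) * I₁ ^ q ≤
          ENNReal.ofReal (M ^ q2) * B ^ (q2 - q) * B ^ q :=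
        mul_le_mul_right (ENNReal.rpow_le_rpow hIleB hq0.le) _
      refine le_trans (ENNReal.rpow_le_rpow hstep (by positivity : (0:ℝ) ≤ 1/q2)) ?_
      have hfinal : (ENNReal.ofReal (M ^ q2) * B ^ (q2 - q) * B ^ q) ^ (1/q2)
          = ENNReal.ofReal M * B := by
        rw [ENNReal.mul_rpow_of_nonneg _ _ (by positivity : (0:ℝ) ≤ 1/q2),
          ENNReal.mul_rpow_of_nonneg _ _ (by positivity : (0:ℝ) ≤ 1/q2),
          ← ENNReal.ofReal_rpow_of_nonneg hM0.le hq20.le,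
          ← ENNReal.rpow_mul, ← ENNReal.rpow_mul, ← ENNReal.rpow_mul,
          mul_one_div_cancel hq20.ne', ENNReal.rpow_one, mul_assoc,
          ← ENNReal.rpow_add _ _ hB0 hBtop,
          show (q2-q) * (1/q2) + q * (1/q2) = 1 by field_simp; ring, ENNReal.rpow_one]
      rw [hfinal, hBdef, ENNReal.ofReal_mul hM0.le, mul_assoc]
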